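/- Let X₁, …, X_n be {0,1}-valued random variables such that for every subset I ⊆ {1,…,n}, P[∀ i ∈ I, X_i = 0] ≤ ∏_{i∈I} P[X_i = 0]. Then for X = Σ X_i and every ε ∈ [0,1], P[X ≤ (1-ε)·E[X]] ≤ exp(-ε²·E[X]/2). -/

import Mathlib

open MeasureTheory

lemma stmt4_integral_01 {Ω : Type*} [MeasurableSpace Ω] (μ : Measure Ω) [IsProbabilityMeasure μ]
    {f : Ω → ℝ} (hf : Measurable f) (h : ∀ ω, f ω = 0 ∨ f ω = 1) :
    Integrable f μ ∧ ∫ ω, f ω ∂μ = (μ {ω | f ω = 1}).toReal := by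
  have hset : MeasurableSet {ω | f ω = 1} := hf (measurableSet_singleton 1)
  have hfeq : f = Set.indicator {ω | f ω = 1} (fun _ => (1:ℝ)) := by
    funext ω
    rcases h ω with h0 | h1
    · simp [Set.indicator_apply, h0, Set.mem_setOf_eq]
    · simp [Set.indicator_apply, h1, Set.mem_setOf_eq]
  constructor
  · rw [hfeq]
    exact (integrable_const (1:ℝ)).indicator hset
  · rw [hfeq, integral_indicator_const (1:ℝ) hset]
    simp
    rfl

lemma stmt4_log_ineq {u : ℝ} (hu : 0 < u) (hu1 : u ≤ 1) :
    (u ^ 2 - 1) / 2 ≤ u * Real.log u := by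
  set f : ℝ → ℝ := fun x => x * Real.log x - (x ^ 2 - 1) / 2 with hfdef
  have hder : ∀ x : ℝ, 0 < x → HasDerivAt f (Real.log x + 1 - x) x := by
    intro x hx
    have h1 := Real.hasDerivAt_mul_log (ne_of_gt hx)
    have h2 : HasDerivAt (fun x : ℝ => (x ^ 2 - 1) / 2) x x := by
      have := ((hasDerivAt_pow 2 x).sub_const 1).div_const 2
      refine this.congr_deriv ?_
      simp
    exact h1.sub h2
  have hanti : AntitoneOn f (Set.Icc u 1) := by
    apply antitoneOn_of_deriv_nonpos (convex_Icc u 1)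
    · apply ContinuousOn.sub
      · exact continuousOn_id.mul (Real.continuousOn_log.mono (by
          intro x hx
          simp only [Set.mem_compl_iff, Set.mem_singleton_iff]
          intro hx0
          rw [hx0] at hx
          exact absurd hx.1 (not_le.mpr hu)))
      · fun_prop
    · intro x hx
      rw [interior_Icc] at hx
      exact ((hder x (lt_trans hu hx.1)).differentiableAt).differentiableWithinAt
    · intro x hx
      rw [interior_Icc] at hx
      have hx0 : 0 < x := lt_trans hu hx.1
      rw [(hder x hx0).deriv]
      have := Real.log_le_sub_one_of_pos hx0
      linarith
  have h1 : f 1 ≤ f u := hanti (Set.mem_Icc.mpr ⟨le_refl u, hu1⟩)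
    (Set.mem_Icc.mpr ⟨hu1, le_refl 1⟩) hu1
  simp only [hfdef, Real.log_one, mul_zero, one_pow, sub_self, zero_div, zero_sub,
    neg_nonpos] at h1 ⊢
  linarith

/-- Chernoff lower-tail bound for jointly negatively correlated `{0,1}`-valued random
variables. -/
theorem stmt4 {Ω : Type*} [MeasurableSpace Ω] (μ : Measure Ω) [IsProbabilityMeasure μ]
    (n : ℕ) (X : Fin n → Ω → ℝ)
    (hmeas : ∀ i, Measurable (X i))
    (h01 : ∀ i ω, X i ω = 0 ∨ X i ω = 1)
    (hneg : ∀ I : Finset (Fin n),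
      μ {ω | ∀ i ∈ I, X i ω = 0} ≤ ∏ i ∈ I, μ {ω | X i ω = 0})
    (ε : ℝ) (hε : ε ∈ Set.Icc (0 : ℝ) 1) :
    μ {ω | ∑ i, X i ω ≤ (1 - ε) * ∫ ω', ∑ i, X i ω' ∂μ}
      ≤ ENNReal.ofReal (Real.exp (-(ε ^ 2) * (∫ ω', ∑ i, X i ω' ∂μ) / 2)) := by
  obtain ⟨hε0, hε1⟩ := hε
  set m : ℝ := ∫ ω', ∑ i, X i ω' ∂μ with hm
  set p : Fin n → ℝ := fun i => (μ {ω | X i ω = 1}).toReal with hpdef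
  have hXi_int : ∀ i, Integrable (X i) μ := fun i => (stmt4_integral_01 μ (hmeas i) (h01 i)).1
  have hm_eq : m = ∑ i, p i := by
    rw [hm, integral_finset_sum _ (fun i _ => hXi_int i)]
    exact Finset.sum_congr rfl fun i _ => (stmt4_integral_01 μ (hmeas i) (h01 i)).2
  have hp0 : ∀ i, 0 ≤ p i := fun i => ENNReal.toReal_nonneg
  have hp1 : ∀ i, p i ≤ 1 := fun i => by
    rw [hpdef]
    exact ENNReal.toReal_le_of_le_ofReal one_pos.le (by simpa using prob_le_one)
  have hm0 : 0 ≤ m := by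
    rw [hm_eq]; exact Finset.sum_nonneg fun i _ => hp0 i
  -- μ {X i = 0} in terms of p i
  have hq : ∀ i, (μ {ω | X i ω = 0}).toReal = 1 - p i := by
    intro i
    have hcompl : {ω | X i ω = 0} = {ω | X i ω = 1}ᶜ := by
      ext ω
      rcases h01 i ω with h | h <;> simp [h]
    have hms : MeasurableSet {ω | X i ω = 1} := hmeas i (measurableSet_singleton 1)
    rw [hcompl, prob_compl_eq_one_sub hms,
      ENNReal.toReal_sub_of_le (by simpa using prob_le_one) ENNReal.one_ne_top]
    simp [hpdef]
  -- generic product bound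
  have hprodexp : ∀ c : ℝ, 0 ≤ c → c ≤ 1 → ∏ i, (1 - c * p i) ≤ Real.exp (-(c * m)) := by
    intro c hc0 hc1
    calc ∏ i, (1 - c * p i) ≤ ∏ i, Real.exp (-(c * p i)) := by
          apply Finset.prod_le_prod
          · intro i _
            nlinarith [hp0 i, hp1 i]
          · intro i _
            have := Real.add_one_le_exp (-(c * p i))
            linarith
      _ = Real.exp (-(c * m)) := by
          rw [← Real.exp_sum]
          congr 1
          rw [hm_eq, Finset.mul_sum, ← Finset.sum_neg_distrib]
  -- product of (1 - X i) as an indicator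
  have hYif : ∀ (I : Finset (Fin n)) (ω : Ω),
      (∏ i ∈ I, (1 - X i ω)) = if (∀ i ∈ I, X i ω = 0) then 1 else 0 := by
    intro I ω
    induction I using Finset.induction_on with
    | empty => simp
    | @insert a s ha ih =>
      rw [Finset.prod_insert ha, ih]
      rcases h01 a ω with h | h
      · simp [h, Finset.forall_mem_insert]
      · simp [h, Finset.forall_mem_insert]
  have hYmeas : ∀ I : Finset (Fin n), Measurable (fun ω => ∏ i ∈ I, (1 - X i ω)) :=
    fun I => Finset.measurable_prod _ (fun i _ => (measurable_const.sub (hmeas i)))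
  have hY01 : ∀ (I : Finset (Fin n)) (ω : Ω),
      (∏ i ∈ I, (1 - X i ω)) = 0 ∨ (∏ i ∈ I, (1 - X i ω)) = 1 := by
    intro I ω
    rw [hYif]
    by_cases h : ∀ i ∈ I, X i ω = 0
    · right; rw [if_pos h]
    · left; rw [if_neg h]
  have hYint : ∀ I : Finset (Fin n), Integrable (fun ω => ∏ i ∈ I, (1 - X i ω)) μ :=
    fun I => (stmt4_integral_01 μ (hYmeas I) (hY01 I)).1
  have hYset : ∀ I : Finset (Fin n),
      {ω | (∏ i ∈ I, (1 - X i ω)) = 1} = {ω | ∀ i ∈ I, X i ω = 0} := by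
    intro I
    ext ω
    simp only [Set.mem_setOf_eq, hYif]
    by_cases h : ∀ i ∈ I, X i ω = 0 <;> simp [h]
  have hYval : ∀ I : Finset (Fin n),
      ∫ ω, (∏ i ∈ I, (1 - X i ω)) ∂μ = (μ {ω | ∀ i ∈ I, X i ω = 0}).toReal := by
    intro I
    rw [(stmt4_integral_01 μ (hYmeas I) (hY01 I)).2, hYset I]
  -- the key mgf bound
  have hkey : ∀ t : ℝ, t ≤ 0 →
      ∫ ω, Real.exp (t * ∑ i, X i ω) ∂μ ≤ ∏ i, (1 - (1 - Real.exp t) * p i) := by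
    intro t ht
    have het0 : 0 < Real.exp t := Real.exp_pos t
    have het1 : Real.exp t ≤ 1 := Real.exp_le_one_iff.mpr ht
    -- pointwise expansion
    have hpt : ∀ ω : Ω, Real.exp (t * ∑ i, X i ω)
        = ∑ I ∈ (Finset.univ : Finset (Fin n)).powerset,
            ((1 - Real.exp t) ^ I.card * (Real.exp t) ^ (Finset.univ \ I).card)
              * ∏ i ∈ I, (1 - X i ω) := by
      intro ω
      rw [Finset.mul_sum, Real.exp_sum]
      have hfac : ∀ i ∈ (Finset.univ : Finset (Fin n)), Real.exp (t * X i ω)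
          = (1 - Real.exp t) * (1 - X i ω) + Real.exp t := by
        intro i _
        rcases h01 i ω with h | h <;> simp [h]
      rw [Finset.prod_congr rfl hfac, Finset.prod_add]
      apply Finset.sum_congr rfl
      intro I _
      rw [Finset.prod_const, Finset.prod_mul_distrib, Finset.prod_const]
      ring
    calc ∫ ω, Real.exp (t * ∑ i, X i ω) ∂μ
        = ∑ I ∈ (Finset.univ : Finset (Fin n)).powerset,
            ((1 - Real.exp t) ^ I.card * (Real.exp t) ^ (Finset.univ \ I).card)
              * (μ {ω | ∀ i ∈ I, X i ω = 0}).toReal := by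
          rw [show (fun ω => Real.exp (t * ∑ i, X i ω))
              = fun ω => ∑ I ∈ (Finset.univ : Finset (Fin n)).powerset,
                ((1 - Real.exp t) ^ I.card * (Real.exp t) ^ (Finset.univ \ I).card)
                  * ∏ i ∈ I, (1 - X i ω) from funext hpt]
          rw [integral_finset_sum _ (fun I _ => (hYint I).const_mul _)]
          exact Finset.sum_congr rfl fun I _ => by rw [integral_const_mul, hYval I]
      _ ≤ ∑ I ∈ (Finset.univ : Finset (Fin n)).powerset,
            ((1 - Real.exp t) ^ I.card * (Real.exp t) ^ (Finset.univ \ I).card)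
              * ∏ i ∈ I, (1 - p i) := by
          apply Finset.sum_le_sum
          intro I _
          apply mul_le_mul_of_nonneg_left
          · have h1 := hneg I
            have h2 : (∏ i ∈ I, μ {ω | X i ω = 0}) ≠ ⊤ :=
              ENNReal.prod_ne_top (fun i _ => measure_ne_top μ _)
            calc (μ {ω | ∀ i ∈ I, X i ω = 0}).toReal
                ≤ (∏ i ∈ I, μ {ω | X i ω = 0}).toReal := ENNReal.toReal_mono h2 h1
              _ = ∏ i ∈ I, (1 - p i) := by
                  rw [ENNReal.toReal_prod]
                  exact Finset.prod_congr rfl fun i _ => hq i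
          · have h3 : (0:ℝ) ≤ 1 - Real.exp t := by linarith
            positivity
      _ = ∏ i, (1 - (1 - Real.exp t) * p i) := by
          have : ∀ i ∈ (Finset.univ : Finset (Fin n)),
              (1 : ℝ) - (1 - Real.exp t) * p i
                = (1 - Real.exp t) * (1 - p i) + Real.exp t := by
            intro i _; ring
          rw [Finset.prod_congr rfl this, Finset.prod_add]
          apply Finset.sum_congr rfl
          intro I _
          rw [Finset.prod_const, Finset.prod_mul_distrib, Finset.prod_const]
          ring
  -- main case split
  rcases eq_or_lt_of_le hε1 with hε1' | hε1'
  · -- ε = 1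
    subst hε1'
    have hsub : {ω | ∑ i, X i ω ≤ (1 - 1) * m} ⊆ {ω | ∀ i ∈ (Finset.univ : Finset (Fin n)), X i ω = 0} := by
      intro ω hω
      simp only [Set.mem_setOf_eq, sub_self, zero_mul] at hω ⊢
      intro i _
      have h1 : ∀ j ∈ (Finset.univ : Finset (Fin n)), (0:ℝ) ≤ X j ω := by
        intro j _
        rcases h01 j ω with h | h <;> simp [h]
      have := Finset.sum_nonneg h1
      have hsum0 : ∑ j, X j ω = 0 := le_antisymm hω this
      have := (Finset.sum_eq_zero_iff_of_nonneg h1).mp hsum0 i (Finset.mem_univ i)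
      exact this
    calc μ {ω | ∑ i, X i ω ≤ (1 - 1) * m}
        ≤ μ {ω | ∀ i ∈ (Finset.univ : Finset (Fin n)), X i ω = 0} := measure_mono hsub
      _ ≤ ∏ i, μ {ω | X i ω = 0} := hneg Finset.univ
      _ ≤ ENNReal.ofReal (Real.exp (-(1:ℝ) ^ 2 * m / 2)) := by
          have hfin : (∏ i, μ {ω | X i ω = 0}) ≠ ⊤ :=
            ENNReal.prod_ne_top (fun i _ => measure_ne_top μ _)
          rw [← ENNReal.ofReal_toReal hfin]
          apply ENNReal.ofReal_le_ofReal
          have h1 : (∏ i, μ {ω | X i ω = 0}).toReal = ∏ i, (1 - p i) := by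
            rw [ENNReal.toReal_prod]
            exact Finset.prod_congr rfl fun i _ => hq i
          rw [h1]
          have h2 : ∏ i, ((1:ℝ) - p i) ≤ Real.exp (-(1 * m)) := by
            have := hprodexp 1 zero_le_one le_rfl
            simpa using this
          refine h2.trans ?_
          apply Real.exp_le_exp.mpr
          nlinarith
  · -- ε < 1
    set t : ℝ := Real.log (1 - ε) with htdef
    have hu0 : 0 < 1 - ε := by linarith
    have het : Real.exp t = 1 - ε := Real.exp_log hu0
    have ht0 : t ≤ 0 := Real.log_nonpos (by linarith) (by linarith)
    have hint : Integrable (fun ω => Real.exp (t * ∑ i, X i ω)) μ := by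
      have hptfun : (fun ω => Real.exp (t * ∑ i, X i ω))
          = fun ω => ∑ I ∈ (Finset.univ : Finset (Fin n)).powerset,
              ((1 - Real.exp t) ^ I.card * (Real.exp t) ^ (Finset.univ \ I).card)
                * ∏ i ∈ I, (1 - X i ω) := by
        funext ω
        rw [Finset.mul_sum, Real.exp_sum]
        have hfac : ∀ i ∈ (Finset.univ : Finset (Fin n)), Real.exp (t * X i ω)
            = (1 - Real.exp t) * (1 - X i ω) + Real.exp t := by
          intro i _
          rcases h01 i ω with h | h <;> simp [h]
        rw [Finset.prod_congr rfl hfac, Finset.prod_add]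
        apply Finset.sum_congr rfl
        intro I _
        rw [Finset.prod_const, Finset.prod_mul_distrib, Finset.prod_const]
        ring
      rw [hptfun]
      exact integrable_finset_sum _ (fun I _ => (hYint I).const_mul _)
    have hmarkov := ProbabilityTheory.measure_le_le_exp_mul_mgf (X := fun ω => ∑ i, X i ω)
      (μ := μ) ((1 - ε) * m) ht0 hint
    have hmgf : ProbabilityTheory.mgf (fun ω => ∑ i, X i ω) μ t
        = ∫ ω, Real.exp (t * ∑ i, X i ω) ∂μ := rfl
    have hbound : (μ {ω | ∑ i, X i ω ≤ (1 - ε) * m}).toReal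
        ≤ Real.exp (-(ε ^ 2) * m / 2) := by
      have h1 : ProbabilityTheory.mgf (fun ω => ∑ i, X i ω) μ t ≤ Real.exp (-(ε * m)) := by
        rw [hmgf]
        refine (hkey t ht0).trans ?_
        have : (1 : ℝ) - Real.exp t = ε := by rw [het]; ring
        rw [this]
        exact hprodexp ε hε0 (le_of_lt hε1')
      calc (μ {ω | ∑ i, X i ω ≤ (1 - ε) * m}).toReal
          ≤ Real.exp (-t * ((1 - ε) * m)) * ProbabilityTheory.mgf (fun ω => ∑ i, X i ω) μ t :=
            hmarkov
        _ ≤ Real.exp (-t * ((1 - ε) * m)) * Real.exp (-(ε * m)) :=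
            mul_le_mul_of_nonneg_left h1 (Real.exp_pos _).le
        _ = Real.exp (-t * ((1 - ε) * m) + -(ε * m)) := (Real.exp_add _ _).symm
        _ ≤ Real.exp (-(ε ^ 2) * m / 2) := by
            apply Real.exp_le_exp.mpr
            have hlog := stmt4_log_ineq hu0 (by linarith)
            -- (1-ε) * log (1-ε) ≥ ((1-ε)^2 - 1)/2
            have : -t * (1 - ε) + -ε ≤ -(ε ^ 2) / 2 := by
              rw [htdef]
              nlinarith [hlog]
            nlinarith [hm0, this]
    have hfin : μ {ω | ∑ i, X i ω ≤ (1 - ε) * m} ≠ ⊤ := measure_ne_top μ _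
    rw [← ENNReal.ofReal_toReal hfin]
    exact ENNReal.ofReal_le_ofReal hbound
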